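/- arXiv:1506.03039 — 4 statements merged into one kernel-verified Lean document; each statement's English description precedes it below -/
import Mathlib

section
/- For any constants c1, c2, c3 > 0 and any finitely supported probability measure Q on X, min(c1, c2, c3) · S(Q, T_P, G_‖·‖) ≤ S(Q, T_P, G^{c1:3}_‖·‖) ≤ max(c1, c2, c3) · S(Q, T_P, G_‖·‖). -/
open MeasureTheory Filter Finset

noncomputable section

namespace Stein

variable {d : ℕ}

/-- `N` is a norm on `ℝ^d` (represented as a real-valued function on `Fin d → ℝ`). -/
def IsNorm (N : (Fin d → ℝ) → ℝ) : Prop :=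
  (∀ v, 0 ≤ N v) ∧ (∀ v, N v = 0 ↔ v = 0) ∧
    (∀ (c : ℝ) (v), N (c • v) = |c| * N v) ∧ (∀ v w, N (v + w) ≤ N v + N w)

/-- The dual norm `‖w‖* = sup {⟨w, v⟩ : N v = 1}` on vectors. -/
def dualVec (N : (Fin d → ℝ) → ℝ) (w : Fin d → ℝ) : ℝ :=
  sSup {r | ∃ v : Fin d → ℝ, N v = 1 ∧ r = ∑ i, w i * v i}

/-- Matrix-vector multiplication. -/
def matVec (M : Fin d → Fin d → ℝ) (v : Fin d → ℝ) : Fin d → ℝ :=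
  fun j => ∑ k, M j k * v k

/-- The dual norm `‖M‖* = sup {‖M v‖* : N v = 1}` on matrices. -/
def dualMat (N : (Fin d → ℝ) → ℝ) (M : Fin d → Fin d → ℝ) : ℝ :=
  sSup {r | ∃ v : Fin d → ℝ, N v = 1 ∧ r = dualVec N (matVec M v)}

/-- The gradient of a scalar function, as a vector of partial derivatives. -/
def gradv (f : (Fin d → ℝ) → ℝ) (x : Fin d → ℝ) : Fin d → ℝ :=
  fun j => fderiv ℝ f x (Pi.single j 1)

/-- `∇ log p`. -/
def gradLog (p : (Fin d → ℝ) → ℝ) (x : Fin d → ℝ) : Fin d → ℝ :=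
  gradv (fun y => Real.log (p y)) x

/-- The gradient matrix `(∇g(x))_{jk} = ∂_k g_j(x)` of a vector-valued function. -/
def gradMat (g : (Fin d → ℝ) → Fin d → ℝ) (x : Fin d → ℝ) : Fin d → Fin d → ℝ :=
  fun j k => fderiv ℝ (fun y => g y j) x (Pi.single k 1)

/-- The Langevin Stein operator `(T_P g)(x) = ⟨g(x), ∇log p(x)⟩ + ∑_j ∂_j g_j(x)`. -/
def steinOp (p : (Fin d → ℝ) → ℝ) (g : (Fin d → ℝ) → Fin d → ℝ) (x : Fin d → ℝ) : ℝ :=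
  (∑ j, g x j * gradLog p x j) + ∑ j, gradMat g x j j

/-- `n` is an outward unit normal vector to `X` at the boundary point `x`. -/
def isOutwardNormal (X : Set (Fin d → ℝ)) (x n : Fin d → ℝ) : Prop :=
  x ∈ frontier X ∧ (∑ i, n i * n i) = 1 ∧ ∀ y ∈ X, (∑ i, n i * (y i - x i)) ≤ 0

/-- The (non-uniform) classical Stein set `G^{c1:3}_‖·‖`; the classical Stein set is
`steinSet N X 1 1 1`.  The boundary condition `⟨g(x), n(x)⟩ = 0` is imposed at every
boundary point at which the outward unit normal is defined (i.e. unique). -/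
def steinSet (N : (Fin d → ℝ) → ℝ) (X : Set (Fin d → ℝ)) (c1 c2 c3 : ℝ) :
    Set ((Fin d → ℝ) → Fin d → ℝ) :=
  {g | (∀ x ∈ X, DifferentiableAt ℝ g x) ∧
       (∀ x ∈ X, DifferentiableAt ℝ (fun y => gradMat g y) x) ∧
       (∀ x ∈ X, dualVec N (g x) ≤ c1) ∧
       (∀ x ∈ X, dualMat N (gradMat g x) ≤ c2) ∧
       (∀ x ∈ X, ∀ y ∈ X, dualMat N (gradMat g x - gradMat g y) ≤ c3 * N (x - y)) ∧
       (∀ x n, isOutwardNormal X x n → (∃! m, isOutwardNormal X x m) →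
          (∑ i, g x i * n i) = 0)}

/-- The Stein discrepancy of a finitely supported measure with support `S` and
mass function `q`, over the function class `G`. -/
def steinDiscr (N : (Fin d → ℝ) → ℝ) (p : (Fin d → ℝ) → ℝ)
    (S : Finset (Fin d → ℝ)) (q : (Fin d → ℝ) → ℝ)
    (G : Set ((Fin d → ℝ) → Fin d → ℝ)) : ℝ :=
  sSup {r | ∃ g ∈ G, r = |∑ x ∈ S, q x * steinOp p g x|}

/-! ### Auxiliary lemmas -/

lemma bddAbove_mul_image {c : ℝ} (hc : 0 < c) {s : Set ℝ} (hb : BddAbove s) :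
    BddAbove ((fun r => c * r) '' s) := by
  obtain ⟨M, hM⟩ := hb
  refine ⟨c * M, ?_⟩
  rintro r ⟨x, hx, rfl⟩
  exact mul_le_mul_of_nonneg_left (hM hx) hc.le

lemma bddAbove_of_bddAbove_mul_image {c : ℝ} (hc : 0 < c) {s : Set ℝ}
    (hb : BddAbove ((fun r => c * r) '' s)) : BddAbove s := by
  obtain ⟨M, hM⟩ := hb
  refine ⟨M / c, fun x hx => (le_div_iff₀ hc).2 ?_⟩
  rw [mul_comm]
  exact hM ⟨x, hx, rfl⟩

lemma sSup_mul_image (c : ℝ) (hc : 0 < c) (s : Set ℝ) :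
    sSup ((fun r => c * r) '' s) = c * sSup s := by
  rcases s.eq_empty_or_nonempty with rfl | hs
  · simp [Real.sSup_empty]
  by_cases hb : BddAbove s
  · apply le_antisymm
    · refine csSup_le (hs.image _) ?_
      rintro r ⟨x, hx, rfl⟩
      exact mul_le_mul_of_nonneg_left (le_csSup hb hx) hc.le
    · have hbi := bddAbove_mul_image hc hb
      rw [mul_comm, ← le_div_iff₀ hc]
      refine csSup_le hs fun x hx => ?_
      rw [le_div_iff₀ hc, mul_comm]
      exact le_csSup hbi ⟨x, hx, rfl⟩
  · have hbi : ¬ BddAbove ((fun r => c * r) '' s) :=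
      fun h => hb (bddAbove_of_bddAbove_mul_image hc h)
    rw [Real.sSup_of_not_bddAbove hb, Real.sSup_of_not_bddAbove hbi, mul_zero]

lemma dualVec_smul (N : (Fin d → ℝ) → ℝ) {c : ℝ} (hc : 0 < c) (w : Fin d → ℝ) :
    dualVec N (c • w) = c * dualVec N w := by
  rw [dualVec, dualVec, ← sSup_mul_image c hc]
  congr 1
  ext r
  constructor
  · rintro ⟨v, hv, rfl⟩
    refine ⟨∑ i, w i * v i, ⟨v, hv, rfl⟩, ?_⟩
    simp [Finset.mul_sum, mul_assoc]
  · rintro ⟨x, ⟨v, hv, rfl⟩, rfl⟩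
    refine ⟨v, hv, ?_⟩
    simp [Finset.mul_sum, mul_assoc]

lemma matVec_smul (M : Fin d → Fin d → ℝ) (c : ℝ) (v : Fin d → ℝ) :
    matVec (c • M) v = c • matVec M v := by
  funext j
  simp [matVec, Finset.mul_sum, mul_assoc]

lemma dualMat_smul (N : (Fin d → ℝ) → ℝ) {c : ℝ} (hc : 0 < c) (M : Fin d → Fin d → ℝ) :
    dualMat N (c • M) = c * dualMat N M := by
  rw [dualMat, dualMat, ← sSup_mul_image c hc]
  congr 1
  ext r
  constructor
  · rintro ⟨v, hv, rfl⟩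
    exact ⟨dualVec N (matVec M v), ⟨v, hv, rfl⟩, by rw [matVec_smul, dualVec_smul N hc]⟩
  · rintro ⟨x, ⟨v, hv, rfl⟩, rfl⟩
    exact ⟨v, hv, by simp [matVec_smul, dualVec_smul N hc]⟩

lemma gradMat_smul (g : (Fin d → ℝ) → Fin d → ℝ) {c : ℝ} (hc : c ≠ 0) :
    gradMat (fun y => c • g y) = fun y => c • gradMat g y := by
  funext y j k
  have heq : (fun z => (c • g z) j) = fun z => c * g z j := by
    funext z; simp
  show fderiv ℝ (fun z => (c • g z) j) y (Pi.single k 1) = c * gradMat g y j k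
  rw [heq]
  by_cases hdiff : DifferentiableAt ℝ (fun z => g z j) y
  · rw [fderiv_const_mul hdiff c]
    simp [gradMat]
  · have h2 : ¬ DifferentiableAt ℝ (fun z => c * g z j) y := by
      intro h
      have := h.const_mul c⁻¹
      simp only [← mul_assoc, inv_mul_cancel₀ hc, one_mul] at this
      exact hdiff this
    rw [gradMat, fderiv_zero_of_not_differentiableAt hdiff,
      fderiv_zero_of_not_differentiableAt h2]
    simp

lemma steinOp_smul (p : (Fin d → ℝ) → ℝ) (g : (Fin d → ℝ) → Fin d → ℝ) {c : ℝ}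
    (hc : c ≠ 0) (x : Fin d → ℝ) :
    steinOp p (fun y => c • g y) x = c * steinOp p g x := by
  rw [steinOp, steinOp, gradMat_smul g hc]
  simp [Finset.mul_sum, mul_add, mul_assoc]

lemma gradMat_zero : gradMat (fun _ : Fin d → ℝ => (0 : Fin d → ℝ)) = fun _ => 0 := by
  funext y j k
  show fderiv ℝ (fun _ => (0:ℝ)) y (Pi.single k 1) = 0
  rw [fderiv_fun_const]
  simp

lemma dualVec_zero_le (N : (Fin d → ℝ) → ℝ) : dualVec N (0 : Fin d → ℝ) ≤ 0 := by
  apply Real.sSup_le _ le_rfl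
  rintro r ⟨v, hv, rfl⟩
  simp

lemma dualMat_zero_le (N : (Fin d → ℝ) → ℝ) : dualMat N (0 : Fin d → Fin d → ℝ) ≤ 0 := by
  apply Real.sSup_le _ le_rfl
  rintro r ⟨v, hv, rfl⟩
  have hm : matVec (0 : Fin d → Fin d → ℝ) v = 0 := by
    funext j; simp [matVec]
  rw [hm]
  exact dualVec_zero_le N

lemma steinSet_smul (N : (Fin d → ℝ) → ℝ) (X : Set (Fin d → ℝ)) {a b e c : ℝ}
    (hc : 0 < c) {g : (Fin d → ℝ) → Fin d → ℝ} (hg : g ∈ steinSet N X a b e) :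
    (fun y => c • g y) ∈ steinSet N X (c * a) (c * b) (c * e) := by
  obtain ⟨h1, h2, h3, h4, h5, h6⟩ := hg
  refine ⟨?_, ?_, ?_, ?_, ?_, ?_⟩
  · intro x hx; exact (h1 x hx).const_smul c
  · intro x hx
    simp only [gradMat_smul g hc.ne']
    exact (h2 x hx).const_smul c
  · intro x hx
    show dualVec N (c • g x) ≤ c * a
    rw [dualVec_smul N hc]
    exact mul_le_mul_of_nonneg_left (h3 x hx) hc.le
  · intro x hx
    simp only [gradMat_smul g hc.ne']
    show dualMat N (c • gradMat g x) ≤ c * b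
    rw [dualMat_smul N hc]
    exact mul_le_mul_of_nonneg_left (h4 x hx) hc.le
  · intro x hx y hy
    simp only [gradMat_smul g hc.ne']
    show dualMat N (c • gradMat g x - c • gradMat g y) ≤ c * e * N (x - y)
    rw [← smul_sub, dualMat_smul N hc, mul_assoc]
    exact mul_le_mul_of_nonneg_left (h5 x hx y hy) hc.le
  · intro x n hn hu
    have hsum : ∑ i, (c • g x) i * n i = c * ∑ i, g x i * n i := by
      simp [Finset.mul_sum, mul_assoc]
    show ∑ i, (c • g x) i * n i = 0
    rw [hsum, h6 x n hn hu, mul_zero]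

lemma steinSet_mono (N : (Fin d → ℝ) → ℝ) (hN : IsNorm N) (X : Set (Fin d → ℝ))
    {a b e a' b' e' : ℝ} (ha : a ≤ a') (hb : b ≤ b') (he : e ≤ e') :
    steinSet N X a b e ⊆ steinSet N X a' b' e' := by
  rintro g ⟨h1, h2, h3, h4, h5, h6⟩
  exact ⟨h1, h2, fun x hx => (h3 x hx).trans ha, fun x hx => (h4 x hx).trans hb,
    fun x hx y hy => (h5 x hx y hy).trans (mul_le_mul_of_nonneg_right he (hN.1 _)), h6⟩

lemma zero_mem_steinSet (N : (Fin d → ℝ) → ℝ) (hN : IsNorm N) (X : Set (Fin d → ℝ))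
    {a b e : ℝ} (ha : 0 < a) (hb : 0 < b) (he : 0 < e) :
    (fun _ : Fin d → ℝ => (0 : Fin d → ℝ)) ∈ steinSet N X a b e := by
  refine ⟨fun x _ => differentiableAt_const _, ?_, ?_, ?_, ?_, ?_⟩
  · intro x _
    simp only [gradMat_zero]
    exact differentiableAt_const _
  · intro x _
    exact (dualVec_zero_le N).trans ha.le
  · intro x _
    simp only [gradMat_zero]
    exact (dualMat_zero_le N).trans hb.le
  · intro x _ y _
    simp only [gradMat_zero, sub_self]
    exact (dualMat_zero_le N).trans (mul_nonneg he.le (hN.1 _))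
  · intro x n _ _
    simp

lemma steinOp_zero (p : (Fin d → ℝ) → ℝ) (x : Fin d → ℝ) :
    steinOp p (fun _ : Fin d → ℝ => (0 : Fin d → ℝ)) x = 0 := by
  simp [steinOp, gradMat_zero]

/-- Proposition 4: equivalence of non-uniform Stein discrepancies. -/
theorem steinDiscr_nonuniform_equiv {d : ℕ} (N : (Fin d → ℝ) → ℝ) (hN : IsNorm N)
    (X : Set (Fin d → ℝ)) (hXopen : IsOpen X) (hXconv : Convex ℝ X)
    (p : (Fin d → ℝ) → ℝ) (hppos : ∀ x ∈ X, 0 < p x) (hpC1 : ContDiffOn ℝ 1 p X)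
    (c1 c2 c3 : ℝ) (hc1 : 0 < c1) (hc2 : 0 < c2) (hc3 : 0 < c3)
    (S : Finset (Fin d → ℝ)) (hSX : ∀ x ∈ S, x ∈ X)
    (q : (Fin d → ℝ) → ℝ) (hq0 : ∀ x ∈ S, 0 ≤ q x) (hq1 : ∑ x ∈ S, q x = 1) :
    min c1 (min c2 c3) * steinDiscr N p S q (steinSet N X 1 1 1) ≤
        steinDiscr N p S q (steinSet N X c1 c2 c3) ∧
      steinDiscr N p S q (steinSet N X c1 c2 c3) ≤
        max c1 (max c2 c3) * steinDiscr N p S q (steinSet N X 1 1 1) := by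
  set cmin := min c1 (min c2 c3) with hcmin_def
  set cmax := max c1 (max c2 c3) with hcmax_def
  have hcmin : 0 < cmin := lt_min hc1 (lt_min hc2 hc3)
  have hcmax : 0 < cmax := hc1.trans_le (le_max_left _ _)
  set A := {r | ∃ g ∈ steinSet N X 1 1 1, r = |∑ x ∈ S, q x * steinOp p g x|} with hA_def
  set B := {r | ∃ g ∈ steinSet N X c1 c2 c3, r = |∑ x ∈ S, q x * steinOp p g x|} with hB_def
  have habs : ∀ (g : (Fin d → ℝ) → Fin d → ℝ) (c : ℝ), 0 < c →
      |∑ x ∈ S, q x * steinOp p (fun y => c • g y) x| =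
        c * |∑ x ∈ S, q x * steinOp p g x| := by
    intro g c hc
    have hsum : ∑ x ∈ S, q x * steinOp p (fun y => c • g y) x =
        c * ∑ x ∈ S, q x * steinOp p g x := by
      rw [Finset.mul_sum]
      refine Finset.sum_congr rfl fun x _ => ?_
      rw [steinOp_smul p g hc.ne']
      ring
    rw [hsum, abs_mul, abs_of_pos hc]
  have hsub1 : (fun r => cmin * r) '' A ⊆ B := by
    rintro r ⟨x, ⟨g, hg, rfl⟩, rfl⟩
    refine ⟨fun y => cmin • g y, ?_, (habs g cmin hcmin).symm⟩
    refine steinSet_mono N hN X ?_ ?_ ?_ (steinSet_smul N X hcmin hg)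
    · rw [mul_one]; exact min_le_left _ _
    · rw [mul_one]; exact (min_le_right _ _).trans (min_le_left _ _)
    · rw [mul_one]; exact (min_le_right _ _).trans (min_le_right _ _)
  have hsub2 : B ⊆ (fun r => cmax * r) '' A := by
    rintro r ⟨g, hg, rfl⟩
    have hinv : 0 < cmax⁻¹ := inv_pos.2 hcmax
    refine ⟨|∑ x ∈ S, q x * steinOp p (fun y => cmax⁻¹ • g y) x|,
      ⟨fun y => cmax⁻¹ • g y, ?_, rfl⟩, ?_⟩
    · refine steinSet_mono N hN X ?_ ?_ ?_ (steinSet_smul N X hinv hg)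
      · rw [← div_eq_inv_mul]
        exact div_le_one_of_le₀ (le_max_left _ _) hcmax.le
      · rw [← div_eq_inv_mul]
        exact div_le_one_of_le₀ ((le_max_left _ _).trans (le_max_right _ _)) hcmax.le
      · rw [← div_eq_inv_mul]
        exact div_le_one_of_le₀ ((le_max_right _ _).trans (le_max_right _ _)) hcmax.le
    · rw [habs g cmax⁻¹ hinv]
      show cmax * (cmax⁻¹ * |∑ x ∈ S, q x * steinOp p g x|) = _
      rw [← mul_assoc, mul_inv_cancel₀ hcmax.ne', one_mul]
  have h0A : (0 : ℝ) ∈ A := by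
    refine ⟨fun _ => 0, zero_mem_steinSet N hN X one_pos one_pos one_pos, ?_⟩
    simp [steinOp_zero]
  have h0B : (0 : ℝ) ∈ B := by
    refine ⟨fun _ => 0, zero_mem_steinSet N hN X hc1 hc2 hc3, ?_⟩
    simp [steinOp_zero]
  show cmin * sSup A ≤ sSup B ∧ sSup B ≤ cmax * sSup A
  by_cases hb : BddAbove A
  · have hbB : BddAbove B := (bddAbove_mul_image hcmax hb).mono hsub2
    constructor
    · rw [← sSup_mul_image cmin hcmin]
      exact csSup_le_csSup hbB (Set.Nonempty.image _ ⟨0, h0A⟩) hsub1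
    · rw [← sSup_mul_image cmax hcmax]
      exact csSup_le_csSup (bddAbove_mul_image hcmax hb) ⟨0, h0B⟩ hsub2
  · have hbB : ¬ BddAbove B := by
      intro h
      exact hb (bddAbove_of_bddAbove_mul_image hcmin (h.mono hsub1))
    rw [Real.sSup_of_not_bddAbove hb, Real.sSup_of_not_bddAbove hbB]
    simp

end Stein
end
end

section
/- Let c1, c3 > 0 and let g : ℝ → ℝ be differentiable with |g(x)| ≤ c1 for all x ∈ ℝ and with derivative g' satisfying |g'(x) − g'(y)| ≤ c3|x − y| for all x, y ∈ ℝ. Then for every x ∈ ℝ, |g(x)| ≤ c1 − g'(x)²/(2c3). -/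
/-- if `g` is differentiable, `|g| ≤ c1`, and `g'` is `c3`-Lipschitz,
then `|g(x)| ≤ c1 − g'(x)²/(2 c3)` for every `x`. -/
theorem abs_le_sub_sq_deriv (c1 c3 : ℝ) (hc1 : 0 < c1) (hc3 : 0 < c3)
    (g : ℝ → ℝ) (hg : Differentiable ℝ g)
    (hbound : ∀ x, |g x| ≤ c1)
    (hlip : ∀ x y, |deriv g x - deriv g y| ≤ c3 * |x - y|) :
    ∀ x, |g x| ≤ c1 - (deriv g x) ^ 2 / (2 * c3) := by
  intro x
  set d := deriv g x with hd
  have hcont : Continuous (deriv g) := by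
    have : LipschitzWith (Real.toNNReal c3) (deriv g) := by
      apply LipschitzWith.of_dist_le_mul
      intro a b
      rw [Real.dist_eq, Real.dist_eq, Real.coe_toNNReal _ hc3.le]
      exact hlip a b
    exact this.continuous
  have key : ∀ h : ℝ, |g (x + h) - g x - d * h| ≤ c3 * h ^ 2 / 2 := by
    intro h
    have hint : g (x + h) - g x = ∫ t in x..(x + h), deriv g t := by
      rw [intervalIntegral.integral_deriv_eq_sub (fun t _ => hg t)
        (hcont.intervalIntegrable _ _)]
    have heq : g (x + h) - g x - d * h = ∫ t in x..(x + h), (deriv g t - d) := by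
      rw [intervalIntegral.integral_sub (hcont.intervalIntegrable _ _)
        intervalIntegrable_const, intervalIntegral.integral_const, ← hint]
      simp
      ring
    rw [heq]
    have habs : abs (∫ t in x..(x + h), c3 * |t - x|) = c3 * h ^ 2 / 2 := by
      have h1 : (∫ t in x..(x + h), c3 * |t - x|) = c3 * ∫ t in (0:ℝ)..h, |t| := by
        rw [intervalIntegral.integral_const_mul]
        congr 1
        have := intervalIntegral.integral_comp_sub_right (a := x) (b := x + h)
          (f := fun t => |t|) x
        simpa using this
      rcases le_or_gt 0 h with hh | hh
      · have : (∫ t in (0:ℝ)..h, |t|) = h ^ 2 / 2 := by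
          rw [intervalIntegral.integral_congr (g := fun t => t)]
          · simp [integral_id]
          · intro t ht
            rw [Set.uIcc_of_le hh] at ht
            exact abs_of_nonneg ht.1
        rw [h1, this, abs_of_nonneg]
        · ring
        · positivity
      · have : (∫ t in (0:ℝ)..h, |t|) = -(h ^ 2 / 2) := by
          rw [intervalIntegral.integral_congr (g := fun t => -t)]
          · rw [intervalIntegral.integral_neg, integral_id]; ring
          · intro t ht
            rw [Set.uIcc_of_ge hh.le] at ht
            exact abs_of_nonpos ht.2
        rw [h1, this]
        rw [abs_of_nonpos (by nlinarith [sq_nonneg h])]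
        ring
    calc |∫ t in x..(x + h), (deriv g t - d)|
        ≤ abs (∫ t in x..(x + h), c3 * |t - x|) := by
          simp only [← Real.norm_eq_abs]
          apply intervalIntegral.norm_integral_le_abs_of_norm_le
          · filter_upwards with t
            simpa [Real.norm_eq_abs] using hlip t x
          · exact (Continuous.intervalIntegrable (by continuity) _ _)
      _ = c3 * h ^ 2 / 2 := habs
  have hsq : c3 * (d / c3) ^ 2 / 2 = d ^ 2 / (2 * c3) := by
    field_simp
  have hup : g x ≤ c1 - d ^ 2 / (2 * c3) := by
    have h2 := key (d / c3)
    rw [hsq] at h2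
    have hdm : d * (d / c3) = d ^ 2 / c3 := by field_simp
    rw [hdm] at h2
    have := abs_le.1 h2
    have hb := abs_le.1 (hbound (x + d / c3))
    have hc : d ^ 2 / c3 - d ^ 2 / (2 * c3) = d ^ 2 / (2 * c3) := by
      field_simp; ring
    nlinarith [this.1, this.2, hb.1, hb.2]
  have hlo : -(c1 - d ^ 2 / (2 * c3)) ≤ g x := by
    have h2 := key (-(d / c3))
    have hsq' : c3 * (-(d / c3)) ^ 2 / 2 = d ^ 2 / (2 * c3) := by
      field_simp
    rw [hsq'] at h2
    have hdm : d * (-(d / c3)) = -(d ^ 2 / c3) := by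
      rw [mul_neg]
      congr 1
      field_simp
    rw [hdm] at h2
    have := abs_le.1 h2
    have hb := abs_le.1 (hbound (x + -(d / c3)))
    have hc : d ^ 2 / c3 - d ^ 2 / (2 * c3) = d ^ 2 / (2 * c3) := by
      field_simp; ring
    nlinarith [this.1, this.2, hb.1, hb.2]
  exact abs_le.2 ⟨hlo, hup⟩
end

section
/- Let c2, c3 > 0 and let g : ℝ → ℝ be differentiable with |g'(t)| ≤ c2 for all t and |g'(s) − g'(t)| ≤ c3|s − t| for all s, t. Then for all x < y: ∫_x^y max(−c2, g'(x) − c3(t − x), g'(y) − c3(y − t)) dt ≤ g(y) − g(x) ≤ ∫_x^y min(c2, g'(x) + c3(t − x), g'(y) + c3(y − t)) dt. -/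
open intervalIntegral

/-- the increment `g(y) − g(x)` is bracketed by the integrals of the
largest `c2`-bounded `c3`-Lipschitz minorant and the smallest `c2`-bounded `c3`-Lipschitz
majorant of `g'` consistent with its values at the endpoints. -/
theorem increment_bracketed (c2 c3 : ℝ) (hc2 : 0 < c2) (hc3 : 0 < c3)
    (g : ℝ → ℝ) (hg : Differentiable ℝ g)
    (hbound : ∀ t, |deriv g t| ≤ c2)
    (hlip : ∀ s t, |deriv g s - deriv g t| ≤ c3 * |s - t|) :
    ∀ x y : ℝ, x < y →
      (∫ t in x..y,
          max (-c2) (max (deriv g x - c3 * (t - x)) (deriv g y - c3 * (y - t))))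
        ≤ g y - g x ∧
      g y - g x ≤
        ∫ t in x..y,
          min c2 (min (deriv g x + c3 * (t - x)) (deriv g y + c3 * (y - t))) := by
  have hcont : Continuous (deriv g) := by
    have : LipschitzWith c3.toNNReal (deriv g) := by
      apply LipschitzWith.of_dist_le_mul
      intro s t
      simpa [Real.dist_eq, Real.coe_toNNReal _ hc3.le] using hlip s t
    exact this.continuous
  intro x y hxy
  have hftc : (∫ t in x..y, deriv g t) = g y - g x :=
    intervalIntegral.integral_deriv_eq_sub (fun t _ => hg.differentiableAt)
      (hcont.intervalIntegrable x y)
  have hintd : IntervalIntegrable (deriv g) MeasureTheory.volume x y :=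
    hcont.intervalIntegrable x y
  have hintlo : IntervalIntegrable
      (fun t => max (-c2) (max (deriv g x - c3 * (t - x)) (deriv g y - c3 * (y - t))))
      MeasureTheory.volume x y := by
    apply Continuous.intervalIntegrable
    fun_prop
  have hinthi : IntervalIntegrable
      (fun t => min c2 (min (deriv g x + c3 * (t - x)) (deriv g y + c3 * (y - t))))
      MeasureTheory.volume x y := by
    apply Continuous.intervalIntegrable
    fun_prop
  constructor
  · rw [← hftc]
    apply intervalIntegral.integral_mono_on hxy.le hintlo hintd
    intro t ht
    rcases ht with ⟨htx, hty⟩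
    have h1 : -c2 ≤ deriv g t := neg_le_of_abs_le (hbound t)
    have h2 : deriv g x - c3 * (t - x) ≤ deriv g t := by
      have := (abs_le.mp (hlip x t)).2
      rw [abs_sub_comm, abs_of_nonneg (by linarith : (0:ℝ) ≤ t - x)] at this
      linarith
    have h3 : deriv g y - c3 * (y - t) ≤ deriv g t := by
      have := (abs_le.mp (hlip y t)).2
      rw [abs_of_nonneg (by linarith : (0:ℝ) ≤ y - t)] at this
      linarith
    exact max_le h1 (max_le h2 h3)
  · rw [← hftc]
    apply intervalIntegral.integral_mono_on hxy.le hintd hinthi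
    intro t ht
    rcases ht with ⟨htx, hty⟩
    have h1 : deriv g t ≤ c2 := le_of_abs_le (hbound t)
    have h2 : deriv g t ≤ deriv g x + c3 * (t - x) := by
      have := (abs_le.mp (hlip t x)).2
      rw [abs_of_nonneg (by linarith : (0:ℝ) ≤ t - x)] at this
      linarith
    have h3 : deriv g t ≤ deriv g y + c3 * (y - t) := by
      have := (abs_le.mp (hlip t y)).2
      rw [abs_sub_comm, abs_of_nonneg (by linarith : (0:ℝ) ≤ y - t)] at this
      linarith
    exact le_min h1 (le_min h2 h3)
end

section
/- Let P be the uniform distribution on X = (0, 1), so that ∇log p ≡ 0 and (T_P g)(x) = g'(x), and let G^{(1/2,1/2,1)} be the non-uniform classical Stein set with constants (c1, c2, c3) = (1/2, 1/2, 1). Then for every finitely supported probability measure Q on (0, 1), the Stein discrepancy equals the Wasserstein distance: S(Q, T_P, G^{(1/2,1/2,1)}) = d_W(Q, P). -/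
open MeasureTheory Filter Finset

noncomputable section

namespace Stein

/-- The open interval `(a, b) ⊆ ℝ` determined by extended-real endpoints. -/
def intervalX (a b : EReal) : Set ℝ := {x : ℝ | a < (x : EReal) ∧ (x : EReal) < b}

/-- The univariate non-uniform classical Stein set `G^{c1:3}` on `(a, b)`. -/
def steinSet1 (a b : EReal) (c1 c2 c3 : ℝ) : Set (ℝ → ℝ) :=
  {g | (∀ x ∈ intervalX a b, DifferentiableAt ℝ g x) ∧
       (∀ x ∈ intervalX a b, DifferentiableAt ℝ (deriv g) x) ∧
       (∀ x ∈ intervalX a b, |g x| ≤ c1) ∧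
       (∀ x ∈ intervalX a b, |deriv g x| ≤ c2) ∧
       (∀ x ∈ intervalX a b, ∀ y ∈ intervalX a b,
          |deriv g x - deriv g y| ≤ c3 * |x - y|) ∧
       (∀ r : ℝ, ((r : EReal) = a ∨ (r : EReal) = b) →
          Tendsto g (nhdsWithin r (intervalX a b)) (nhds 0))}

/-- The univariate Langevin Stein operator `(T_P g)(x) = g(x) (log p)'(x) + g'(x)`;
for the uniform target `p ≡ 1` this is just `g'(x)`. -/
def steinOp1 (p g : ℝ → ℝ) (x : ℝ) : ℝ :=
  g x * deriv (fun y => Real.log (p y)) x + deriv g x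

/-! ### Auxiliary lemmas -/

lemma intervalX_01 : intervalX (0 : EReal) 1 = Set.Ioo (0:ℝ) 1 := by
  ext x
  simp only [intervalX, Set.mem_setOf_eq, Set.mem_Ioo]
  constructor
  · rintro ⟨h1, h2⟩
    exact ⟨by exact_mod_cast h1, by exact_mod_cast h2⟩
  · rintro ⟨h1, h2⟩
    exact ⟨by exact_mod_cast h1, by exact_mod_cast h2⟩

lemma steinOp1_uniform (g : ℝ → ℝ) (x : ℝ) : steinOp1 (fun _ => 1) g x = deriv g x := by
  simp [steinOp1]

lemma continuous_of_lip {f : ℝ → ℝ} (hf : ∀ x y, |f x - f y| ≤ |x - y|) : Continuous f := by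
  have : LipschitzWith 1 f := by
    refine LipschitzWith.of_dist_le_mul fun x y => ?_
    simpa [Real.dist_eq] using hf x y
  exact this.continuous

lemma continuousOn_of_lipOn {f : ℝ → ℝ} {s : Set ℝ}
    (hf : ∀ x ∈ s, ∀ y ∈ s, |f x - f y| ≤ |x - y|) : ContinuousOn f s := by
  have : LipschitzOnWith 1 f s := by
    rw [lipschitzOnWith_iff_dist_le_mul]
    intro x hx y hy
    simpa [Real.dist_eq] using hf x hx y hy
  exact this.continuousOn

lemma integrableOn_Ioo01_of_bound {f : ℝ → ℝ} (hc : ContinuousOn f (Set.Ioo 0 1))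
    {C : ℝ} (hb : ∀ x ∈ Set.Ioo (0:ℝ) 1, |f x| ≤ C) :
    IntegrableOn f (Set.Ioo (0:ℝ) 1) := by
  refine ⟨hc.aestronglyMeasurable measurableSet_Ioo,
    HasFiniteIntegral.restrict_of_bounded (C := C) ?_ ?_⟩
  · simp [Real.volume_Ioo]
  · filter_upwards [ae_restrict_mem measurableSet_Ioo] with x hx
    simpa [Real.norm_eq_abs] using hb x hx

lemma integrableOn_Ioo01_of_lipOn {h : ℝ → ℝ}
    (hl : ∀ x ∈ Set.Ioo (0:ℝ) 1, ∀ y ∈ Set.Ioo (0:ℝ) 1, |h x - h y| ≤ |x - y|) :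
    IntegrableOn h (Set.Ioo (0:ℝ) 1) := by
  refine integrableOn_Ioo01_of_bound (continuousOn_of_lipOn hl)
    (C := |h (1/2)| + 1) fun x hx => ?_
  have h12 : (1/2 : ℝ) ∈ Set.Ioo (0:ℝ) 1 := by norm_num
  have h1 := hl x hx (1/2) h12
  have habs : |x - 1/2| ≤ 1 := by
    rw [abs_le]; constructor <;> [linarith [hx.1]; linarith [hx.2]]
  calc |h x| ≤ |h x - h (1/2)| + |h (1/2)| := by
        have := abs_add_le (h x - h (1/2)) (h (1/2)); simpa using this
    _ ≤ |h (1/2)| + 1 := by linarith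

lemma integrableOn_of_lip {f : ℝ → ℝ} (hf : ∀ x y, |f x - f y| ≤ |x - y|) :
    IntegrableOn f (Set.Ioo (0:ℝ) 1) := by
  refine integrableOn_Ioo01_of_bound (continuous_of_lip hf).continuousOn
    (C := |f 0| + 1) fun x hx => ?_
  have h1 := hf x 0
  have : |x - 0| ≤ 1 := by rw [sub_zero, abs_of_pos hx.1]; exact hx.2.le
  calc |f x| ≤ |f x - f 0| + |f 0| := by
        have := abs_add_le (f x - f 0) (f 0); simpa using this
    _ ≤ |f 0| + 1 := by linarith

lemma center_diff_le {h : ℝ → ℝ}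
    (hint : IntegrableOn h (Set.Ioo (0:ℝ) 1))
    {x C : ℝ} (hb : ∀ y ∈ Set.Ioo (0:ℝ) 1, |h x - h y| ≤ C)
    (hbint : IntegrableOn (fun y => |h x - h y|) (Set.Ioo (0:ℝ) 1)) :
    |h x - ∫ y in Set.Ioo (0:ℝ) 1, h y| ≤ C := by
  have hvol : (volume (Set.Ioo (0:ℝ) 1)).toReal = 1 := by simp [Real.volume_Ioo]
  have h1 : h x - ∫ y in Set.Ioo (0:ℝ) 1, h y
      = ∫ y in Set.Ioo (0:ℝ) 1, (h x - h y) := by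
    rw [integral_sub (integrableOn_const (C := h x) (s := Set.Ioo (0:ℝ) 1) (μ := volume) (by simp [Real.volume_Ioo])) hint]
    rw [setIntegral_const, measureReal_def, hvol]
    simp
  rw [h1]
  calc |∫ y in Set.Ioo (0:ℝ) 1, (h x - h y)|
      ≤ ∫ y in Set.Ioo (0:ℝ) 1, |h x - h y| := by
        simpa [Real.norm_eq_abs] using
          MeasureTheory.norm_integral_le_integral_norm
            (μ := volume.restrict (Set.Ioo (0:ℝ) 1)) (f := fun y => h x - h y)
    _ ≤ ∫ _y in Set.Ioo (0:ℝ) 1, C := by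
        refine setIntegral_mono_on hbint
          (integrableOn_const (by simp [Real.volume_Ioo])) measurableSet_Ioo hb
    _ = C := by rw [setIntegral_const, measureReal_def, hvol]; simp

lemma integral_abs_dist (t : ℝ) (ht : t ∈ Set.Icc (0:ℝ) 1) :
    (∫ y in Set.Ioo (0:ℝ) 1, |t - y|) ≤ 1 / 2 := by
  have hcont : Continuous fun y : ℝ => |t - y| :=
    (continuous_const.sub continuous_id).abs
  have h0 : (∫ y in Set.Ioo (0:ℝ) 1, |t - y|) = ∫ y in (0:ℝ)..1, |t - y| := by
    rw [intervalIntegral.integral_of_le zero_le_one, integral_Ioc_eq_integral_Ioo]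
  rw [h0]
  have hsplit : (∫ y in (0:ℝ)..1, |t - y|)
      = (∫ y in (0:ℝ)..t, |t - y|) + ∫ y in t..(1:ℝ), |t - y| :=
    (intervalIntegral.integral_add_adjacent_intervals
      (hcont.intervalIntegrable _ _) (hcont.intervalIntegrable _ _)).symm
  have h1 : (∫ y in (0:ℝ)..t, |t - y|) = ∫ y in (0:ℝ)..t, (t - y) := by
    refine intervalIntegral.integral_congr fun y hy => ?_
    rw [Set.uIcc_of_le ht.1] at hy
    exact abs_of_nonneg (by linarith [hy.2])
  have h2 : (∫ y in t..(1:ℝ), |t - y|) = ∫ y in t..(1:ℝ), (y - t) := by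
    refine intervalIntegral.integral_congr fun y hy => ?_
    rw [Set.uIcc_of_le ht.2] at hy
    rw [abs_sub_comm]
    exact abs_of_nonneg (by linarith [hy.1])
  have e1 : (∫ y in (0:ℝ)..t, (t - y)) = t * t - t ^ 2 / 2 := by
    rw [intervalIntegral.integral_sub (intervalIntegrable_const)
      (intervalIntegral.intervalIntegrable_id), intervalIntegral.integral_const,
      integral_id]
    simp
  have e2 : (∫ y in t..(1:ℝ), (y - t)) = (1 / 2 - t ^ 2 / 2) - t * (1 - t) := by
    rw [intervalIntegral.integral_sub (intervalIntegral.intervalIntegrable_id)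
      (intervalIntegrable_const), integral_id, intervalIntegral.integral_const]
    simp
    ring
  rw [hsplit, h1, h2, e1, e2]
  nlinarith [ht.1, ht.2]

lemma center_le_half {K : ℝ → ℝ} (hK : ∀ x y, |K x - K y| ≤ |x - y|) {t : ℝ}
    (ht : t ∈ Set.Icc (0:ℝ) 1) :
    |K t - ∫ y in Set.Ioo (0:ℝ) 1, K y| ≤ 1 / 2 := by
  have hint : IntegrableOn K (Set.Ioo (0:ℝ) 1) := integrableOn_of_lip hK
  have hvol : (volume (Set.Ioo (0:ℝ) 1)).toReal = 1 := by simp [Real.volume_Ioo]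
  have h1 : K t - ∫ y in Set.Ioo (0:ℝ) 1, K y
      = ∫ y in Set.Ioo (0:ℝ) 1, (K t - K y) := by
    rw [integral_sub (integrableOn_const (C := K t) (s := Set.Ioo (0:ℝ) 1) (μ := volume) (by simp [Real.volume_Ioo])) hint,
      setIntegral_const, measureReal_def, hvol]
    simp
  rw [h1]
  have habs : IntegrableOn (fun y => |K t - K y|) (Set.Ioo (0:ℝ) 1) :=
    ((integrableOn_const (by simp [Real.volume_Ioo])).sub hint).abs
  have hdist : IntegrableOn (fun y => |t - y|) (Set.Ioo (0:ℝ) 1) :=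
    integrableOn_Ioo01_of_bound ((continuous_const.sub continuous_id).abs).continuousOn
      (C := 1) fun y hy => by
        rw [abs_abs, abs_le]
        constructor <;> [nlinarith [ht.1, ht.2, hy.1, hy.2]; nlinarith [ht.1, ht.2, hy.1, hy.2]]
  calc |∫ y in Set.Ioo (0:ℝ) 1, (K t - K y)|
      ≤ ∫ y in Set.Ioo (0:ℝ) 1, |K t - K y| := by
        simpa [Real.norm_eq_abs] using
          MeasureTheory.norm_integral_le_integral_norm
            (μ := volume.restrict (Set.Ioo (0:ℝ) 1)) (f := fun y => K t - K y)
    _ ≤ ∫ y in Set.Ioo (0:ℝ) 1, |t - y| :=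
        setIntegral_mono_on habs hdist measurableSet_Ioo fun y _ => hK t y
    _ ≤ 1 / 2 := integral_abs_dist t ht

/-! ### The moving average smoothing -/

/-- moving average of `H` over `[x, x + δ]` . -/
def mov (δ : ℝ) (H : ℝ → ℝ) (x : ℝ) : ℝ := δ⁻¹ * ∫ t in (0:ℝ)..δ, H (x + t)

variable {H : ℝ → ℝ} {δ : ℝ}

lemma mov_lip (hH : ∀ x y, |H x - H y| ≤ |x - y|) (hδ : 0 < δ) (x y : ℝ) :
    |mov δ H x - mov δ H y| ≤ |x - y| := by
  have hc := continuous_of_lip hH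
  have hix : IntervalIntegrable (fun t => H (x + t)) volume 0 δ :=
    (hc.comp (continuous_const.add continuous_id)).intervalIntegrable _ _
  have hiy : IntervalIntegrable (fun t => H (y + t)) volume 0 δ :=
    (hc.comp (continuous_const.add continuous_id)).intervalIntegrable _ _
  have h1 : mov δ H x - mov δ H y
      = δ⁻¹ * ∫ t in (0:ℝ)..δ, (H (x + t) - H (y + t)) := by
    rw [mov, mov, ← mul_sub, ← intervalIntegral.integral_sub hix hiy]
  rw [h1, abs_mul, abs_inv]
  have h2 : ‖∫ t in (0:ℝ)..δ, (H (x + t) - H (y + t))‖ ≤ |x - y| * |δ - 0| := by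
    refine intervalIntegral.norm_integral_le_of_norm_le_const fun t _ => ?_
    rw [Real.norm_eq_abs]
    have := hH (x + t) (y + t)
    simpa [add_sub_add_right_eq_sub] using this
  rw [Real.norm_eq_abs] at h2
  calc |δ|⁻¹ * |∫ t in (0:ℝ)..δ, (H (x + t) - H (y + t))|
      ≤ |δ|⁻¹ * (|x - y| * |δ - 0|) := mul_le_mul_of_nonneg_left h2 (by positivity)
    _ = |x - y| := by rw [sub_zero, abs_of_pos hδ]; field_simp

lemma mov_close (hH : ∀ x y, |H x - H y| ≤ |x - y|) (hδ : 0 < δ) (x : ℝ) :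
    |mov δ H x - H x| ≤ δ := by
  have hc := continuous_of_lip hH
  have hix : IntervalIntegrable (fun t => H (x + t)) volume 0 δ :=
    (hc.comp (continuous_const.add continuous_id)).intervalIntegrable _ _
  have h0 : δ⁻¹ * ∫ _t in (0:ℝ)..δ, H x = H x := by
    rw [intervalIntegral.integral_const]
    simp
    field_simp
  have h1 : mov δ H x - H x = δ⁻¹ * ∫ t in (0:ℝ)..δ, (H (x + t) - H x) := by
    rw [intervalIntegral.integral_sub hix intervalIntegrable_const, mul_sub, h0, mov]
  rw [h1, abs_mul, abs_inv]
  have h2 : ‖∫ t in (0:ℝ)..δ, (H (x + t) - H x)‖ ≤ δ * |δ - 0| := by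
    refine intervalIntegral.norm_integral_le_of_norm_le_const fun t ht => ?_
    rw [Set.uIoc_of_le hδ.le] at ht
    rw [Real.norm_eq_abs]
    have := hH (x + t) x
    have h3 : x + t - x = t := by ring
    rw [h3] at this
    refine le_trans this ?_
    rw [abs_of_pos ht.1]
    exact ht.2
  rw [Real.norm_eq_abs] at h2
  calc |δ|⁻¹ * |∫ t in (0:ℝ)..δ, (H (x + t) - H x)|
      ≤ |δ|⁻¹ * (δ * |δ - 0|) := mul_le_mul_of_nonneg_left h2 (by positivity)
    _ = δ := by rw [sub_zero, abs_of_pos hδ]; field_simp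

lemma mov_hasDerivAt (hH : Continuous H) (x : ℝ) :
    HasDerivAt (mov δ H) (δ⁻¹ * (H (x + δ) - H x)) x := by
  have key : mov δ H = fun z => δ⁻¹ *
      ((∫ u in (0:ℝ)..(z + δ), H u) - ∫ u in (0:ℝ)..z, H u) := by
    funext z
    rw [mov]
    congr 1
    have h1 : (∫ t in (0:ℝ)..δ, H (z + t)) = ∫ t in (0:ℝ)..δ, H (t + z) := by
      simp [add_comm]
    rw [h1, intervalIntegral.integral_comp_add_right H z, zero_add]
    have h2 := intervalIntegral.integral_add_adjacent_intervals
      (hH.intervalIntegrable 0 z : IntervalIntegrable H volume 0 z)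
      (hH.intervalIntegrable z (δ + z) : IntervalIntegrable H volume z (δ + z))
    have h3 : δ + z = z + δ := by ring
    rw [h3] at h2
    rw [h3]
    linarith
  rw [key]
  have hF : ∀ y : ℝ, HasDerivAt (fun u => ∫ t in (0:ℝ)..u, H t) (H y) y := fun y =>
    (hH.integral_hasStrictDerivAt 0 y).hasDerivAt
  have hA : HasDerivAt (fun z : ℝ => ∫ t in (0:ℝ)..(z + δ), H t) (H (x + δ)) x := by
    have := HasDerivAt.comp (x := x) (hF (x + δ)) ((hasDerivAt_id x).add_const δ)
    rw [mul_one] at this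
    exact this
  exact (hA.sub (hF x)).const_mul δ⁻¹

/-! ### FTC on the open interval for Stein-class functions -/

lemma integral_deriv_zero {g : ℝ → ℝ}
    (hdiff : ∀ x ∈ Set.Ioo (0:ℝ) 1, DifferentiableAt ℝ g x)
    (hbd : ∀ x ∈ Set.Ioo (0:ℝ) 1, |deriv g x| ≤ 1/2)
    (hlip : ∀ x ∈ Set.Ioo (0:ℝ) 1, ∀ y ∈ Set.Ioo (0:ℝ) 1,
      |deriv g x - deriv g y| ≤ 1 * |x - y|)
    (h0 : Tendsto g (nhdsWithin 0 (Set.Ioo (0:ℝ) 1)) (nhds 0))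
    (h1 : Tendsto g (nhdsWithin 1 (Set.Ioo (0:ℝ) 1)) (nhds 0)) :
    ∫ x in Set.Ioo (0:ℝ) 1, deriv g x = 0 := by
  set f := deriv g with hf
  have hlip' : ∀ x ∈ Set.Ioo (0:ℝ) 1, ∀ y ∈ Set.Ioo (0:ℝ) 1, |f x - f y| ≤ |x - y| := by
    intro x hx y hy; simpa using hlip x hx y hy
  have hIoo : IntegrableOn f (Set.Ioo (0:ℝ) 1) :=
    integrableOn_Ioo01_of_bound (continuousOn_of_lipOn hlip') hbd
  have hII : IntervalIntegrable f volume 0 1 := by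
    rw [intervalIntegrable_iff_integrableOn_Ioo_of_le zero_le_one]
    exact hIoo
  have key : ∀ e : ℝ, 0 < e → |∫ x in Set.Ioo (0:ℝ) 1, f x| ≤ e := by
    intro e he
    obtain ⟨δ₁, hδ₁, hg0⟩ := (Metric.tendsto_nhdsWithin_nhds.mp h0) (e/4) (by linarith)
    obtain ⟨δ₂, hδ₂, hg1⟩ := (Metric.tendsto_nhdsWithin_nhds.mp h1) (e/4) (by linarith)
    set ε : ℝ := min (min (δ₁/2) (δ₂/2)) (min (e/4) (1/4)) with hε
    have hεpos : 0 < ε := by positivity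
    have hε14 : ε ≤ 1/4 := le_trans (min_le_right _ _) (min_le_right _ _)
    have hεe : ε ≤ e/4 := le_trans (min_le_right _ _) (min_le_left _ _)
    have hεδ₁ : ε < δ₁ := lt_of_le_of_lt (le_trans (min_le_left _ _) (min_le_left _ _)) (by linarith)
    have hεδ₂ : ε < δ₂ := lt_of_le_of_lt (le_trans (min_le_left _ _) (min_le_right _ _)) (by linarith)
    have hmemε : ε ∈ Set.Ioo (0:ℝ) 1 := ⟨hεpos, by linarith⟩
    have hmem1ε : (1 - ε) ∈ Set.Ioo (0:ℝ) 1 := ⟨by linarith, by linarith⟩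
    have hsub1 : Set.uIcc (0:ℝ) ε ⊆ Set.uIcc (0:ℝ) 1 := by
      rw [Set.uIcc_of_le hεpos.le, Set.uIcc_of_le zero_le_one]
      exact Set.Icc_subset_Icc le_rfl (by linarith)
    have hsub2 : Set.uIcc ε (1-ε) ⊆ Set.uIcc (0:ℝ) 1 := by
      rw [Set.uIcc_of_le (by linarith : ε ≤ 1 - ε), Set.uIcc_of_le zero_le_one]
      exact Set.Icc_subset_Icc (by linarith) (by linarith)
    have hsub3 : Set.uIcc (1-ε) (1:ℝ) ⊆ Set.uIcc (0:ℝ) 1 := by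
      rw [Set.uIcc_of_le (by linarith : (1:ℝ) - ε ≤ 1), Set.uIcc_of_le zero_le_one]
      exact Set.Icc_subset_Icc (by linarith) le_rfl
    have hI1 := hII.mono_set hsub1
    have hI2 := hII.mono_set hsub2
    have hI3 := hII.mono_set hsub3
    have hsplit : (∫ x in (0:ℝ)..1, f x)
        = (∫ x in (0:ℝ)..ε, f x) + ((∫ x in ε..(1-ε), f x) + ∫ x in (1-ε)..(1:ℝ), f x) := by
      rw [intervalIntegral.integral_add_adjacent_intervals hI2 hI3,
        intervalIntegral.integral_add_adjacent_intervals hI1 (hII.mono_set (by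
          rw [Set.uIcc_of_le (by linarith : ε ≤ (1:ℝ)), Set.uIcc_of_le zero_le_one]
          exact Set.Icc_subset_Icc (by linarith) le_rfl))]
    have hmid : (∫ x in ε..(1-ε), f x) = g (1-ε) - g ε := by
      refine intervalIntegral.integral_eq_sub_of_hasDerivAt (fun x hx => ?_) hI2
      rw [Set.uIcc_of_le (by linarith : ε ≤ 1 - ε)] at hx
      exact (hdiff x ⟨lt_of_lt_of_le hεpos hx.1, lt_of_le_of_lt hx.2 (by linarith)⟩).hasDerivAt
    have hb1 : |∫ x in (0:ℝ)..ε, f x| ≤ (1/2) * |ε - 0| := by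
      rw [← Real.norm_eq_abs]
      refine intervalIntegral.norm_integral_le_of_norm_le_const fun x hx => ?_
      rw [Set.uIoc_of_le hεpos.le] at hx
      exact (Real.norm_eq_abs _) ▸ hbd x ⟨hx.1, lt_of_le_of_lt hx.2 (by linarith)⟩
    have hb3 : |∫ x in (1-ε)..(1:ℝ), f x| ≤ (1/2) * |1 - (1-ε)| := by
      rw [← Real.norm_eq_abs]
      refine intervalIntegral.norm_integral_le_of_norm_le_const_ae ?_
      have hne : ∀ᵐ x : ℝ, x ≠ (1:ℝ) := by
        refine ae_iff.2 ?_
        have : {x : ℝ | ¬x ≠ 1} = {(1:ℝ)} := by ext x; simp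
        rw [this]
        exact measure_singleton 1
      filter_upwards [hne] with x hxne hx
      rw [Set.uIoc_of_le (by linarith : (1:ℝ) - ε ≤ 1)] at hx
      exact (Real.norm_eq_abs _) ▸
        hbd x ⟨by linarith [hx.1], lt_of_le_of_ne hx.2 hxne⟩
    have hgε : |g ε| < e/4 := by
      have := hg0 hmemε (by rw [Real.dist_eq]; simpa [abs_of_pos hεpos] using hεδ₁)
      simpa [Real.dist_eq] using this
    have hg1ε : |g (1-ε)| < e/4 := by
      have : dist (1-ε) (1:ℝ) < δ₂ := by
        rw [Real.dist_eq]
        rw [show (1:ℝ) - ε - 1 = -ε by ring, abs_neg, abs_of_pos hεpos]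
        exact hεδ₂
      have := hg1 hmem1ε this
      simpa [Real.dist_eq] using this
    have hIoo_eq : (∫ x in Set.Ioo (0:ℝ) 1, f x) = ∫ x in (0:ℝ)..1, f x := by
      rw [intervalIntegral.integral_of_le zero_le_one, integral_Ioc_eq_integral_Ioo]
    rw [hIoo_eq, hsplit, hmid]
    have habs1 : |ε - 0| = ε := by rw [sub_zero, abs_of_pos hεpos]
    have habs3 : |1 - (1-ε)| = ε := by rw [show (1:ℝ) - (1-ε) = ε by ring, abs_of_pos hεpos]
    rw [habs1] at hb1
    rw [habs3] at hb3
    calc |(∫ x in (0:ℝ)..ε, f x) + ((g (1-ε) - g ε) + ∫ x in (1-ε)..(1:ℝ), f x)|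
        ≤ |∫ x in (0:ℝ)..ε, f x| + (|g (1-ε)| + |g ε| + |∫ x in (1-ε)..(1:ℝ), f x|) := by
          have := abs_add_le (∫ x in (0:ℝ)..ε, f x) ((g (1-ε) - g ε) + ∫ x in (1-ε)..(1:ℝ), f x)
          have h2 := abs_add_le (g (1-ε) - g ε) (∫ x in (1-ε)..(1:ℝ), f x)
          have h3 := abs_sub (g (1-ε)) (g ε)
          linarith
      _ ≤ (1/2)*ε + (e/4 + e/4 + (1/2)*ε) := by
          have := le_of_lt hgε; have := le_of_lt hg1ε; linarith
      _ ≤ e := by linarith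
  have hfin : |∫ x in Set.Ioo (0:ℝ) 1, f x| ≤ 0 := by
    by_contra hcon
    push_neg at hcon
    exact absurd (key _ (half_pos hcon)) (by linarith [key _ hcon])
  exact abs_nonpos_iff.mp hfin

/-! ### The Stein-class solution built from a smooth 1-Lipschitz function -/

lemma construction {K : ℝ → ℝ} (hKlip : ∀ x y, |K x - K y| ≤ |x - y|)
    (hKdiff : ∀ x, DifferentiableAt ℝ K x) :
    ∃ g ∈ steinSet1 (0 : EReal) (1 : EReal) (1/2) (1/2) 1,
      ∀ x : ℝ, deriv g x = K x - ∫ y in Set.Ioo (0:ℝ) 1, K y := by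
  set m : ℝ := ∫ y in Set.Ioo (0:ℝ) 1, K y with hm
  have hKc : Continuous K := continuous_of_lip hKlip
  set g : ℝ → ℝ := fun x => ∫ t in (0:ℝ)..x, (K t - m) with hgdef
  have hgder : ∀ x, HasDerivAt g (K x - m) x := fun x =>
    (((hKc.sub continuous_const).integral_hasStrictDerivAt 0 x)).hasDerivAt
  have hderiv : deriv g = fun x => K x - m := funext fun x => (hgder x).deriv
  have hg_cont : Continuous g := continuous_iff_continuousAt.2 fun x => (hgder x).continuousAt
  have hcenter : ∀ t ∈ Set.Icc (0:ℝ) 1, |K t - m| ≤ 1/2 := fun t ht =>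
    center_le_half hKlip ht
  refine ⟨g, ?_, fun x => by rw [hderiv]⟩
  rw [steinSet1, Set.mem_setOf_eq, intervalX_01]
  refine ⟨fun x _ => (hgder x).differentiableAt, ?_, ?_, ?_, ?_, ?_⟩
  · intro x _
    rw [hderiv]
    exact (hKdiff x).sub_const m
  · intro x hx
    have hb : ‖∫ t in (0:ℝ)..x, (K t - m)‖ ≤ (1/2) * |x - 0| := by
      refine intervalIntegral.norm_integral_le_of_norm_le_const fun t ht => ?_
      rw [Set.uIoc_of_le hx.1.le] at ht
      rw [Real.norm_eq_abs]
      exact hcenter t ⟨ht.1.le, le_trans ht.2 hx.2.le⟩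
    rw [Real.norm_eq_abs] at hb
    have : |x - 0| ≤ 1 := by rw [sub_zero, abs_of_pos hx.1]; exact hx.2.le
    calc |g x| ≤ (1/2) * |x - 0| := hb
      _ ≤ 1/2 := by linarith
  · intro x hx
    rw [hderiv]
    exact hcenter x ⟨hx.1.le, hx.2.le⟩
  · intro x _ y _
    rw [hderiv, one_mul]
    simpa using hKlip x y
  · intro r hr
    have hg0 : g 0 = 0 := intervalIntegral.integral_same
    have hg1 : g 1 = 0 := by
      have hKint : IntervalIntegrable K volume 0 1 := hKc.intervalIntegrable _ _
      have h01 : (∫ t in (0:ℝ)..1, K t) = m := by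
        rw [intervalIntegral.integral_of_le zero_le_one, integral_Ioc_eq_integral_Ioo]
      have : g 1 = (∫ t in (0:ℝ)..1, K t) - ∫ _t in (0:ℝ)..1, m := by
        rw [hgdef]
        exact intervalIntegral.integral_sub hKint intervalIntegrable_const
      rw [this, h01, intervalIntegral.integral_const]
      simp
    rcases hr with hr | hr
    · have : r = 0 := by exact_mod_cast hr
      subst this
      have := (hg_cont.tendsto 0).mono_left (nhdsWithin_le_nhds (s := Set.Ioo (0:ℝ) 1))
      rwa [hg0] at this
    · have : r = 1 := by exact_mod_cast hr
      subst this
      have := (hg_cont.tendsto 1).mono_left (nhdsWithin_le_nhds (s := Set.Ioo (0:ℝ) 1))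
      rwa [hg1] at this

lemma zero_mem : (fun _ : ℝ => (0:ℝ)) ∈ steinSet1 (0 : EReal) (1 : EReal) (1/2) (1/2) 1 := by
  have hd : deriv (fun _ : ℝ => (0:ℝ)) = fun _ : ℝ => (0:ℝ) := by
    funext x; simp
  refine ⟨fun x _ => differentiableAt_const 0, ?_, ?_, ?_, ?_, ?_⟩
  · rw [hd]; exact fun x _ => differentiableAt_const 0
  · intro x _; norm_num
  · intro x _; rw [hd]; norm_num
  · intro x _ y _; rw [hd]; simp
  · intro r _; simpa using tendsto_const_nhds

end Stein

namespace Stein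

/-- for the `Unif(0,1)` target, the non-uniform Stein discrepancy with
Stein factors `(1/2, 1/2, 1)` equals the Wasserstein distance between `Q` and `P`. -/
theorem steinDiscr_eq_wasserstein_uniform
    (S : Finset ℝ) (hS : ∀ x ∈ S, x ∈ Set.Ioo (0 : ℝ) 1)
    (q : ℝ → ℝ) (hq0 : ∀ x ∈ S, 0 ≤ q x) (hq1 : ∑ x ∈ S, q x = 1) :
    sSup {r | ∃ g ∈ steinSet1 (0 : EReal) (1 : EReal) (1 / 2) (1 / 2) 1,
        r = |∑ x ∈ S, q x * steinOp1 (fun _ => 1) g x|} =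
      sSup {r | ∃ h : ℝ → ℝ,
        (∀ x ∈ Set.Ioo (0 : ℝ) 1, ∀ y ∈ Set.Ioo (0 : ℝ) 1, |h x - h y| ≤ |x - y|) ∧
        r = |(∑ x ∈ S, q x * h x) - ∫ x in Set.Ioo (0 : ℝ) 1, h x|} := by
  set A : Set ℝ := {r | ∃ g ∈ steinSet1 (0 : EReal) (1 : EReal) (1 / 2) (1 / 2) 1,
        r = |∑ x ∈ S, q x * steinOp1 (fun _ => 1) g x|} with hAdef
  set B : Set ℝ := {r | ∃ h : ℝ → ℝ,
        (∀ x ∈ Set.Ioo (0 : ℝ) 1, ∀ y ∈ Set.Ioo (0 : ℝ) 1, |h x - h y| ≤ |x - y|) ∧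
        r = |(∑ x ∈ S, q x * h x) - ∫ x in Set.Ioo (0 : ℝ) 1, h x|} with hBdef
  -- 0 ∈ A
  have hA0 : (0:ℝ) ∈ A := by
    refine ⟨fun _ => 0, zero_mem, ?_⟩
    have : ∀ x : ℝ, steinOp1 (fun _ => 1) (fun _ : ℝ => (0:ℝ)) x = 0 := by
      intro x
      rw [steinOp1_uniform]
      simp
    rw [Finset.sum_congr rfl fun x _ => by rw [this x, mul_zero]]
    simp
  -- A ⊆ B
  have hAB : A ⊆ B := by
    rintro r ⟨g, hg, rfl⟩
    obtain ⟨hg1, hg2, hg3, hg4, hg5, hg6⟩ := hg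
    rw [intervalX_01] at hg1 hg3 hg4 hg5
    simp only [intervalX_01] at hg6
    have hzero : ∫ x in Set.Ioo (0:ℝ) 1, deriv g x = 0 :=
      integral_deriv_zero hg1 hg4 hg5
        (hg6 0 (Or.inl (by norm_cast))) (hg6 1 (Or.inr (by norm_cast)))
    refine ⟨deriv g, fun x hx y hy => by simpa using hg5 x hx y hy, ?_⟩
    rw [hzero, sub_zero]
    congr 1
    exact Finset.sum_congr rfl fun x _ => by rw [steinOp1_uniform]
  -- every element of B is at most 1
  have hBle : ∀ r ∈ B, r ≤ 1 := by
    rintro r ⟨h, hlip, rfl⟩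
    have hint := integrableOn_Ioo01_of_lipOn hlip
    set I : ℝ := ∫ y in Set.Ioo (0:ℝ) 1, h y with hI
    have hcent : ∀ s ∈ S, |h s - I| ≤ 1 := by
      intro s hs
      refine center_diff_le hint (fun y hy => ?_) ?_
      · refine le_trans (hlip s (hS s hs) y hy) ?_
        have h1 := (hS s hs).1; have h2 := (hS s hs).2
        rw [abs_le]
        constructor <;> [linarith [hy.2]; linarith [hy.1]]
      · refine ((integrableOn_const (by simp [Real.volume_Ioo])).sub hint).abs
    have hsum : (∑ x ∈ S, q x * h x) - I = ∑ x ∈ S, q x * (h x - I) := by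
      simp only [mul_sub]
      rw [Finset.sum_sub_distrib, ← Finset.sum_mul, hq1, one_mul]
    rw [hsum]
    calc |∑ x ∈ S, q x * (h x - I)|
        ≤ ∑ x ∈ S, |q x * (h x - I)| := Finset.abs_sum_le_sum_abs _ _
      _ ≤ ∑ x ∈ S, q x := by
          refine Finset.sum_le_sum fun x hx => ?_
          rw [abs_mul, abs_of_nonneg (hq0 x hx)]
          calc q x * |h x - I| ≤ q x * 1 :=
                mul_le_mul_of_nonneg_left (hcent x hx) (hq0 x hx)
            _ = q x := mul_one _
      _ = 1 := hq1
  have hBbdd : BddAbove B := ⟨1, fun r hr => hBle r hr⟩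
  have hAbdd : BddAbove A := ⟨1, fun r hr => hBle r (hAB hr)⟩
  refine le_antisymm (csSup_le_csSup hBbdd ⟨0, hA0⟩ hAB) ?_
  refine csSup_le ⟨0, hAB hA0⟩ fun b hb => ?_
  obtain ⟨h, hlip, rfl⟩ := hb
  by_contra hcon
  push_neg at hcon
  set ε : ℝ := (|(∑ x ∈ S, q x * h x) - ∫ x in Set.Ioo (0:ℝ) 1, h x| - sSup A) / 2 with hε
  have hεpos : 0 < ε := by
    have : sSup A < |(∑ x ∈ S, q x * h x) - ∫ x in Set.Ioo (0:ℝ) 1, h x| := hcon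
    simp only [hε]
    linarith
  -- choose the clamping margin a
  obtain ⟨a, ha0, ha14, haε, haS⟩ :
      ∃ a : ℝ, 0 < a ∧ a ≤ 1/4 ∧ a ≤ ε/4 ∧ ∀ s ∈ S, a ≤ s ∧ s ≤ 1 - a := by
    by_cases hSne : S.Nonempty
    · have hmin := hS _ (S.min'_mem hSne)
      have hmax := hS _ (S.max'_mem hSne)
      refine ⟨min (min (ε/4) (1/4)) (min (S.min' hSne) (1 - S.max' hSne)), ?_, ?_, ?_, ?_⟩
      · refine lt_min (lt_min (by linarith) (by norm_num)) (lt_min hmin.1 (by linarith [hmax.2]))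
      · exact le_trans (min_le_left _ _) (min_le_right _ _)
      · exact le_trans (min_le_left _ _) (min_le_left _ _)
      · intro s hs
        constructor
        · exact le_trans (le_trans (min_le_right _ _) (min_le_left _ _)) (S.min'_le s hs)
        · have h1 := S.le_max' s hs
          have h2 : min (min (ε/4) (1/4)) (min (S.min' hSne) (1 - S.max' hSne))
              ≤ 1 - S.max' hSne := le_trans (min_le_right _ _) (min_le_right _ _)
          linarith
    · refine ⟨min (ε/4) (1/4), lt_min (by linarith) (by norm_num),
        min_le_right _ _, min_le_left _ _, fun s hs => absurd ⟨s, hs⟩ hSne⟩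
  -- the clamped extension H
  set H : ℝ → ℝ := fun x => h (max a (min x (1 - a))) with hHdef
  have hclamp_mem : ∀ x : ℝ, max a (min x (1-a)) ∈ Set.Ioo (0:ℝ) 1 := by
    intro x
    constructor
    · exact lt_of_lt_of_le ha0 (le_max_left _ _)
    · have : max a (min x (1-a)) ≤ 1 - a := max_le (by linarith) (min_le_right _ _)
      linarith
  have hHlip : ∀ x y, |H x - H y| ≤ |x - y| := by
    intro x y
    refine le_trans (hlip _ (hclamp_mem x) _ (hclamp_mem y)) ?_
    have h1 : |max a (min x (1-a)) - max a (min y (1-a))| ≤ |min x (1-a) - min y (1-a)| := by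
      have := abs_max_sub_max_le_max a (min x (1-a)) a (min y (1-a))
      simpa using this
    refine le_trans h1 ?_
    have := abs_min_sub_min_le_max x (1-a) y (1-a)
    simpa using this
  have hHs : ∀ s ∈ S, H s = h s := by
    intro s hs
    have hs' := haS s hs
    simp only [hHdef]
    rw [min_eq_left (by linarith [hs'.2]), max_eq_right (by linarith [hs'.1])]
  have hHclose : ∀ y ∈ Set.Ioo (0:ℝ) 1, |H y - h y| ≤ a := by
    intro y hy
    refine le_trans (hlip _ (hclamp_mem y) y hy) ?_
    rcases le_total y a with h' | h'
    · rw [min_eq_left (by linarith), max_eq_left h']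
      rw [abs_of_nonneg (by linarith)]
      linarith [hy.1]
    · rcases le_total y (1-a) with h'' | h''
      · rw [min_eq_left h'', max_eq_right h']
        simp
        linarith
      · rw [min_eq_right h'', max_eq_right (by linarith)]
        rw [abs_of_nonpos (by linarith)]
        linarith [hy.2]
  -- the smoothed function K
  set δ : ℝ := ε/4 with hδdef
  have hδpos : 0 < δ := by simp only [hδdef]; linarith
  set K : ℝ → ℝ := mov δ H with hKdef
  have hKlip : ∀ x y, |K x - K y| ≤ |x - y| := fun x y => mov_lip hHlip hδpos x y
  have hKclose : ∀ x, |K x - H x| ≤ δ := fun x => mov_close hHlip hδpos x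
  have hKdiff : ∀ x, DifferentiableAt ℝ K x := fun x =>
    (mov_hasDerivAt (continuous_of_lip hHlip) x).differentiableAt
  obtain ⟨g, hgmem, hgderiv⟩ := construction hKlip hKdiff
  set m : ℝ := ∫ y in Set.Ioo (0:ℝ) 1, K y with hm
  -- the candidate value
  have hval : (∑ x ∈ S, q x * steinOp1 (fun _ => 1) g x) = ∑ x ∈ S, q x * (K x - m) := by
    refine Finset.sum_congr rfl fun x _ => ?_
    rw [steinOp1_uniform, hgderiv]
  have hV2A : |∑ x ∈ S, q x * (K x - m)| ∈ A := ⟨g, hgmem, by rw [hval]⟩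
  -- estimates
  have hhK_S : ∀ s ∈ S, |h s - K s| ≤ δ := by
    intro s hs
    rw [← hHs s hs, abs_sub_comm]
    exact hKclose s
  have hhK_Ioo : ∀ y ∈ Set.Ioo (0:ℝ) 1, |K y - h y| ≤ δ + a := by
    intro y hy
    have h1 := hKclose y
    have h2 := hHclose y hy
    have h3 := abs_add_le (K y - H y) (H y - h y)
    have h4 : K y - H y + (H y - h y) = K y - h y := by ring
    rw [h4] at h3
    linarith
  have hint_h : IntegrableOn h (Set.Ioo (0:ℝ) 1) := integrableOn_Ioo01_of_lipOn hlip
  have hint_K : IntegrableOn K (Set.Ioo (0:ℝ) 1) := integrableOn_of_lip hKlip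
  have hsum_est : |∑ x ∈ S, q x * (h x - K x)| ≤ δ := by
    calc |∑ x ∈ S, q x * (h x - K x)|
        ≤ ∑ x ∈ S, |q x * (h x - K x)| := Finset.abs_sum_le_sum_abs _ _
      _ ≤ ∑ x ∈ S, q x * δ := by
          refine Finset.sum_le_sum fun x hx => ?_
          rw [abs_mul, abs_of_nonneg (hq0 x hx)]
          exact mul_le_mul_of_nonneg_left (hhK_S x hx) (hq0 x hx)
      _ = δ := by rw [← Finset.sum_mul, hq1, one_mul]
  have hint_est : |∫ y in Set.Ioo (0:ℝ) 1, (K y - h y)| ≤ δ + a := by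
    have habsint : IntegrableOn (fun y => |K y - h y|) (Set.Ioo (0:ℝ) 1) :=
      (hint_K.sub hint_h).abs
    calc |∫ y in Set.Ioo (0:ℝ) 1, (K y - h y)|
        ≤ ∫ y in Set.Ioo (0:ℝ) 1, |K y - h y| := by
          simpa [Real.norm_eq_abs] using
            MeasureTheory.norm_integral_le_integral_norm
              (μ := volume.restrict (Set.Ioo (0:ℝ) 1)) (f := fun y => K y - h y)
      _ ≤ ∫ _y in Set.Ioo (0:ℝ) 1, (δ + a) :=
          setIntegral_mono_on habsint
            (integrableOn_const (by simp [Real.volume_Ioo]))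
            measurableSet_Ioo hhK_Ioo
      _ = δ + a := by rw [setIntegral_const]; simp [Real.volume_Ioo]
  -- decomposition
  have hdecomp : (∑ x ∈ S, q x * h x) - (∫ x in Set.Ioo (0:ℝ) 1, h x)
      = (∑ x ∈ S, q x * (K x - m)) + (∑ x ∈ S, q x * (h x - K x))
        + ∫ y in Set.Ioo (0:ℝ) 1, (K y - h y) := by
    have e1 : ∑ x ∈ S, q x * (K x - m) = (∑ x ∈ S, q x * K x) - m := by
      simp only [mul_sub]
      rw [Finset.sum_sub_distrib, ← Finset.sum_mul, hq1, one_mul]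
    have e2 : ∑ x ∈ S, q x * (h x - K x) = (∑ x ∈ S, q x * h x) - ∑ x ∈ S, q x * K x := by
      simp only [mul_sub]
      rw [Finset.sum_sub_distrib]
    have e3 : (∫ y in Set.Ioo (0:ℝ) 1, (K y - h y))
        = m - ∫ x in Set.Ioo (0:ℝ) 1, h x := by
      rw [integral_sub hint_K hint_h]
    rw [e1, e2, e3]
    ring
  -- final contradiction
  have hfinal : |(∑ x ∈ S, q x * h x) - ∫ x in Set.Ioo (0:ℝ) 1, h x|
      ≤ |∑ x ∈ S, q x * (K x - m)| + δ + (δ + a) := by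
    rw [hdecomp]
    have t1 := abs_add_le ((∑ x ∈ S, q x * (K x - m)) + (∑ x ∈ S, q x * (h x - K x)))
      (∫ y in Set.Ioo (0:ℝ) 1, (K y - h y))
    have t2 := abs_add_le (∑ x ∈ S, q x * (K x - m)) (∑ x ∈ S, q x * (h x - K x))
    linarith
  have hV2le : |∑ x ∈ S, q x * (K x - m)| ≤ sSup A := le_csSup hAbdd hV2A
  have : |(∑ x ∈ S, q x * h x) - ∫ x in Set.Ioo (0:ℝ) 1, h x| ≤ sSup A + ε := by
    have hδε : δ = ε/4 := rfl
    have : δ + (δ + a) ≤ ε := by rw [hδε]; linarith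
    linarith
  simp only [hε] at this
  linarith
end Stein
end
end
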